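/- Let α, p' satisfy αp' > n, and let c > 0. Then ∫_{[c,∞)ⁿ} ‖y‖₁^{−αp'} dy = 1/(w_α (cn)^{αp'−n}), where w_α = (αp'−1)(αp'−2)⋯(αp'−n). -/

import Mathlib

open MeasureTheory
open scoped ENNReal

lemma one_dim (b d : ℝ) (hb : 1 < b) (hd : 0 < d) :
    ∫⁻ x in Set.Ioi d, ENNReal.ofReal (x ^ (-b)) =
      ENNReal.ofReal (d ^ (1 - b) / (b - 1)) := by
  rw [← ofReal_integral_eq_lintegral_ofReal
      (integrableOn_Ioi_rpow_of_lt (by linarith) hd)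
      ((ae_restrict_iff' measurableSet_Ioi).2 (ae_of_all _ fun x hx =>
        Real.rpow_nonneg (le_of_lt (hd.trans hx)) _))]
  rw [integral_Ioi_rpow_of_lt (by linarith) hd]
  rw [show -b + 1 = -(b - 1) by ring]
  rw [show (-d ^ (-(b - 1)) / -(b - 1)) = d ^ (-(b-1)) / (b - 1) by
    rw [neg_div_neg_eq]]
  rw [show -(b - 1) = 1 - b by ring]

lemma lint_shift (g : ℝ → ℝ≥0∞) (hg : Measurable g) (c d : ℝ) :
    ∫⁻ x in Set.Ioi c, g (x + d) = ∫⁻ u in Set.Ioi (c + d), g u := by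
  have h1 : Measure.map (· + d) (volume : Measure ℝ) = volume :=
    map_add_right_eq_self volume d
  calc ∫⁻ x in Set.Ioi c, g (x + d)
      = ∫⁻ x in (· + d) ⁻¹' Set.Ioi (c + d), g (x + d) := by
        congr 1
        ext x
        simp
    _ = ∫⁻ u in Set.Ioi (c + d), g u ∂(Measure.map (· + d) volume) :=
        (setLIntegral_map measurableSet_Ioi hg (measurable_add_const d)).symm
    _ = ∫⁻ u in Set.Ioi (c + d), g u := by rw [h1]

lemma enn_helper (A B C : ℝ) (hB : 0 < B) (hC : 0 < C) :
    ENNReal.ofReal (A / C) * (ENNReal.ofReal B)⁻¹ = ENNReal.ofReal (A / (B * C)) := by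
  rw [mul_comm B C, ← div_div, ENNReal.ofReal_div_of_pos hB]
  exact (div_eq_mul_inv _ _).symm

lemma aux (c : ℝ) (hc : 0 < c) (β : ℝ) :
    ∀ n : ℕ, (n : ℝ) < β → ∀ a : ℝ, 0 ≤ a →
    (∫⁻ y in Set.univ.pi (fun _ : Fin n => Set.Ici c),
        ENNReal.ofReal ((a + ∑ i, y i) ^ (-β))) =
      ENNReal.ofReal ((a + c * n) ^ ((n : ℝ) - β) / ∏ i ∈ Finset.range n, (β - (i + 1))) := by
  intro n
  induction n with
  | zero =>
    intro hβ a ha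
    have hU : (Set.univ.pi (fun _ : Fin 0 => Set.Ici c)) = Set.univ := by
      ext y; simp
    rw [hU, Measure.restrict_univ]
    simp [lintegral_const, volume_pi, Measure.pi_univ, zero_sub]
  | succ n IH =>
    intro hβ a ha
    have hβn : (n : ℝ) < β := by push_cast at hβ ⊢; linarith
    set e := MeasurableEquiv.piFinSuccAbove (fun _ : Fin (n + 1) => ℝ) 0 with he
    have hmp : MeasurePreserving e.symm
        ((volume : Measure ℝ).prod (Measure.pi fun _ : Fin n => (volume : Measure ℝ)))
        (Measure.pi fun _ : Fin (n + 1) => (volume : Measure ℝ)) :=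
      (measurePreserving_piFinSuccAbove (fun _ : Fin (n + 1) => (volume : Measure ℝ)) 0).symm
    have hS : MeasurableSet (Set.univ.pi (fun _ : Fin (n + 1) => Set.Ici c)) :=
      MeasurableSet.univ_pi fun _ => measurableSet_Ici
    have hg : Measurable fun y : Fin (n + 1) → ℝ =>
        ENNReal.ofReal ((a + ∑ i, y i) ^ (-β)) := by
      apply ENNReal.measurable_ofReal.comp
      exact (measurable_const.add (Finset.univ.measurable_sum
        fun i _ => measurable_pi_apply i)).pow measurable_const
    have hpre : e.symm ⁻¹' (Set.univ.pi (fun _ : Fin (n + 1) => Set.Ici c)) =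
        (Set.Ici c) ×ˢ (Set.univ.pi (fun _ : Fin n => Set.Ici c)) := by
      ext ⟨x, y⟩
      rw [he]
      simp only [Set.mem_preimage, Set.mem_pi, Set.mem_univ, forall_true_left,
        Set.mem_prod, Set.mem_Ici, MeasurableEquiv.piFinSuccAbove_symm_apply]
      rw [Fin.forall_iff_succAbove 0]
      simp
    rw [volume_pi, ← hmp.map_eq, setLIntegral_map hS hg hmp.measurable, hpre,
      ← Measure.prod_restrict]
    have hfm : Measurable fun z : ℝ × (Fin n → ℝ) =>
        ENNReal.ofReal ((a + ∑ i, (e.symm z) i) ^ (-β)) := hg.comp e.symm.measurable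
    rw [lintegral_prod _ hfm.aemeasurable, ← volume_pi]
    have hsum : ∀ (x : ℝ) (y : Fin n → ℝ),
        (∑ i, (e.symm (x, y)) i) = x + ∑ i, y i := by
      intro x y
      rw [Fin.sum_univ_succAbove (fun i => (e.symm (x, y)) i) 0]
      simp [he]
    simp only [hsum]
    have hinner : ∀ x ∈ Set.Ici c,
        (∫⁻ y in Set.univ.pi (fun _ : Fin n => Set.Ici c),
          ENNReal.ofReal ((a + (x + ∑ i, y i)) ^ (-β))) =
        ENNReal.ofReal (((a + x) + c * n) ^ ((n : ℝ) - β) /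
          ∏ i ∈ Finset.range n, (β - (i + 1))) := by
      intro x hx
      have := IH hβn (a + x) (by have : c ≤ x := hx; linarith)
      simpa [add_assoc] using this
    rw [setLIntegral_congr_fun measurableSet_Ici hinner]
    have hP : (0 : ℝ) < ∏ i ∈ Finset.range n, (β - (i + 1)) := by
      apply Finset.prod_pos
      intro i hi
      have : (i : ℝ) + 1 ≤ n := by
        have := Finset.mem_range.mp hi
        push_cast
        exact_mod_cast Nat.succ_le_of_lt this
      linarith
    set P := ∏ i ∈ Finset.range n, (β - (i + 1)) with hPdef
    rw [← restrict_Ioi_eq_restrict_Ici]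
    have hstep : (fun x => ENNReal.ofReal ((a + x + c * n) ^ ((n : ℝ) - β) / P)) =
        fun x => ENNReal.ofReal ((x + (a + c * n)) ^ ((n : ℝ) - β)) * (ENNReal.ofReal P)⁻¹ := by
      funext x
      rw [ENNReal.ofReal_div_of_pos hP, div_eq_mul_inv, show a + x + c * n = x + (a + c * n) by ring]
    simp only [hstep]
    rw [lintegral_mul_const' _ _ (by simp [hP])]
    have hmeas : Measurable fun u : ℝ => ENNReal.ofReal (u ^ ((n : ℝ) - β)) :=
      ENNReal.measurable_ofReal.comp (measurable_id.pow measurable_const)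
    rw [lint_shift _ hmeas c (a + c * n)]
    have hd : (0 : ℝ) < c + (a + c * n) := by positivity
    have hexp : ((n : ℝ) - β) = -(β - n) := by ring
    rw [hexp, one_dim (β - n) (c + (a + c * n)) (by push_cast at hβ; linarith) hd]
    rw [enn_helper _ _ _ hP (by push_cast at hβ; linarith)]
    rw [Finset.prod_range_succ]
    push_cast
    rw [show c + (a + c * ↑n) = a + c * ((n : ℝ) + 1) by ring]
    congr 1
    rw [show (1 : ℝ) - (β - ↑n) = (n : ℝ) + 1 - β by ring]
    ring

theorem stmt4 (n : ℕ) (hn : 0 < n) (α p' c : ℝ) (hq : α * p' > n) (hc : 0 < c) :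
    (∫ y in Set.Ici (fun _ => c : Fin n → ℝ), (∑ i, y i) ^ (-(α * p'))) =
      1 / ((∏ i ∈ Finset.range n, (α * p' - (i + 1))) * (c * n) ^ (α * p' - n)) := by
  set β := α * p' with hβdef
  have hS : Set.Ici (fun _ => c : Fin n → ℝ) =
      Set.univ.pi (fun _ : Fin n => Set.Ici c) := by
    rw [Set.pi_univ_Ici]
  have hSm : MeasurableSet (Set.Ici (fun _ => c : Fin n → ℝ)) := by
    rw [hS]; exact MeasurableSet.univ_pi fun _ => measurableSet_Ici
  have hmeas : AEStronglyMeasurable (fun y : Fin n → ℝ => (∑ i, y i) ^ (-β))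
      (volume.restrict (Set.Ici (fun _ => c : Fin n → ℝ))) := by
    apply Measurable.aestronglyMeasurable
    exact (Finset.univ.measurable_sum fun i _ => measurable_pi_apply i).pow measurable_const
  have hpos : ∀ y ∈ Set.Ici (fun _ => c : Fin n → ℝ), (0 : ℝ) < ∑ i, y i := by
    intro y hy
    apply Finset.sum_pos
    · intro i _
      exact lt_of_lt_of_le hc (hy i)
    · exact Finset.univ_nonempty_iff.mpr (Fin.pos_iff_nonempty.mp hn)
  have hnn : 0 ≤ᵐ[volume.restrict (Set.Ici (fun _ => c : Fin n → ℝ))]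
      fun y : Fin n → ℝ => (∑ i, y i) ^ (-β) := by
    filter_upwards [ae_restrict_mem hSm] with y hy
    exact Real.rpow_nonneg (hpos y hy).le _
  rw [integral_eq_lintegral_of_nonneg_ae hnn hmeas]
  have key := aux c hc β n (by exact_mod_cast hq) 0 le_rfl
  simp only [zero_add] at key
  rw [hS, key]
  have hP : (0 : ℝ) < ∏ i ∈ Finset.range n, (β - (i + 1)) := by
    apply Finset.prod_pos
    intro i hi
    have : (i : ℝ) + 1 ≤ n := by
      have := Finset.mem_range.mp hi
      exact_mod_cast Nat.succ_le_of_lt this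
    linarith
  have hcn : (0 : ℝ) < c * n := by
    have : (0 : ℝ) < (n : ℝ) := by exact_mod_cast hn
    positivity
  rw [ENNReal.toReal_ofReal (by positivity)]
  rw [show ((n : ℝ) - β) = -(β - n) by ring, Real.rpow_neg hcn.le]
  field_simp
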